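/- For 1 ≤ p ≤ n−2, every idempotent of the large Schröder monoid LS_n of height p can be written as a product of idempotents of LS_n each of height p+1; consequently, every element of LS_n of height at most p lies in the subsemigroup generated by elements of height exactly p+1. -/

import Mathlib

/-- Partial transformations of the chain `Fin n`. -/
abbrev PT (n : ℕ) := Fin n → Option (Fin n)

/-- Composition of partial transformations: apply `α` first, then `β`. -/
def comp {n : ℕ} (α β : PT n) : PT n := fun x => (α x).bind β

/-- `α` is isotone (order-preserving on its domain). -/
def IsIsotone {n : ℕ} (α : PT n) : Prop :=
  ∀ x y a b : Fin n, α x = some a → α y = some b → x ≤ y → a ≤ b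

/-- `α` is order-decreasing on its domain. -/
def IsDecreasing {n : ℕ} (α : PT n) : Prop :=
  ∀ x a : Fin n, α x = some a → a ≤ x

/-- The large Schröder monoid: isotone, order-decreasing partial transformations. -/
def LS (n : ℕ) : Set (PT n) := {α | IsIsotone α ∧ IsDecreasing α}

/-- The image of a partial transformation. -/
def Im {n : ℕ} (α : PT n) : Set (Fin n) := {y | ∃ x, α x = some y}

/-- The height of a partial transformation is the size of its image. -/
noncomputable def height {n : ℕ} (α : PT n) : ℕ := (Im α).ncard

/-- The kernel of `α`, as a set of pairs of elements of the domain. -/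
def kerS {n : ℕ} (α : PT n) : Set (Fin n × Fin n) :=
  {p | ∃ a : Fin n, α p.1 = some a ∧ α p.2 = some a}

/-- The set of fixed points of `α`. -/
def FixPts {n : ℕ} (α : PT n) : Set (Fin n) := {x | α x = some x}

/-- The identity partial transformation. -/
def idPT (n : ℕ) : PT n := fun x => some x

/-- The product of a list of partial transformations (left-to-right composition). -/
def listProd {n : ℕ} (L : List (PT n)) : PT n := L.foldr comp (idPT n)

namespace LSAux
open Finset
variable {n : ℕ}

theorem comp_assoc (a b c : PT n) : comp (comp a b) c = comp a (comp b c) := by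
  funext y; simp [comp, Option.bind_assoc]; rfl

theorem comp_idPT (a : PT n) : comp a (idPT n) = a := by
  funext y; cases h : a y <;> simp [comp, idPT, h]

theorem idPT_comp (a : PT n) : comp (idPT n) a = a := by
  funext y; simp [comp, idPT]

theorem listProd_nil : listProd ([] : List (PT n)) = idPT n := rfl

theorem listProd_cons (a : PT n) (L : List (PT n)) :
    listProd (a :: L) = comp a (listProd L) := rfl

theorem listProd_append (A B : List (PT n)) :
    listProd (A ++ B) = comp (listProd A) (listProd B) := by
  induction A with
  | nil => rw [List.nil_append, listProd_nil, idPT_comp]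
  | cons a A ih => rw [List.cons_append, listProd_cons, listProd_cons, ih, comp_assoc]

theorem height_eq_card {α : PT n} {S : Finset (Fin n)} (h : Im α = ↑S) :
    height α = S.card := by
  rw [height, h, Set.ncard_coe_finset]

/-- partial identity on a finite set -/
def idp (S : Finset (Fin n)) : PT n := fun y => if y ∈ S then some y else none

theorem idp_mem_LS (S : Finset (Fin n)) : idp S ∈ LS n := by
  constructor
  · intro x y a b hx hy hxy
    unfold idp at hx hy
    split at hx <;> simp_all
  · intro x a hx
    unfold idp at hx
    split at hx <;> simp_all

theorem idp_idem (S : Finset (Fin n)) : comp (idp S) (idp S) = idp S := by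
  funext y
  by_cases h : y ∈ S <;> simp [comp, idp, h]

theorem Im_idp (S : Finset (Fin n)) : Im (idp S) = ↑S := by
  ext y
  constructor
  · rintro ⟨x, hx⟩
    unfold idp at hx
    split at hx <;> simp_all
  · intro hy
    exact ⟨y, by simp [idp, Finset.mem_coe.mp hy]⟩

theorem height_idp (S : Finset (Fin n)) : height (idp S) = S.card :=
  height_eq_card (Im_idp S)

/-- `step S x v`: fixes `S`, maps `x ↦ v`. -/
def step (S : Finset (Fin n)) (x v : Fin n) : PT n :=
  fun y => if y = x then some v else if y ∈ S then some y else none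

variable {S : Finset (Fin n)} {x v : Fin n}

theorem step_mem_LS (hv : v ∈ S) (hx : x ∉ S) (hvx : v ≤ x)
    (hcond : ∀ s ∈ S, s ≤ x → s ≤ v) : step S x v ∈ LS n := by
  constructor
  · intro y y' a b hy hy' hyy
    unfold step at hy hy'
    by_cases h1 : y = x <;> by_cases h2 : y' = x <;> simp [h1, h2] at hy hy'
    · subst hy; subst hy'; exact le_rfl
    · subst hy; subst h1; obtain ⟨h2', rfl⟩ := hy'
      exact le_trans hvx hyy
    · subst hy'; subst h2; obtain ⟨h1', rfl⟩ := hy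
      exact hcond y h1' hyy
    · obtain ⟨_, rfl⟩ := hy; obtain ⟨_, rfl⟩ := hy'; exact hyy
  · intro y a hy
    unfold step at hy
    by_cases h1 : y = x <;> simp [h1] at hy
    · subst hy; subst h1; exact hvx
    · obtain ⟨_, rfl⟩ := hy; exact le_rfl

theorem step_idem (hv : v ∈ S) (hx : x ∉ S) : comp (step S x v) (step S x v) = step S x v := by
  have hvx : v ≠ x := fun h => hx (h ▸ hv)
  funext y
  by_cases h1 : y = x
  · simp [comp, step, h1, hvx, hv]
  · by_cases h2 : y ∈ S <;> simp [comp, step, h1, h2]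

theorem Im_step (hv : v ∈ S) (hx : x ∉ S) : Im (step S x v) = ↑S := by
  have hvx : v ≠ x := fun h => hx (h ▸ hv)
  ext y
  constructor
  · rintro ⟨z, hz⟩
    unfold step at hz
    by_cases h1 : z = x <;> simp [h1] at hz
    · obtain rfl := hz; exact hv
    · obtain ⟨h, rfl⟩ := hz; exact h
  · intro hy
    have hyx : y ≠ x := fun h => hx (h ▸ hy)
    exact ⟨y, by simp [step, hyx, Finset.mem_coe.mp hy]⟩

theorem height_step (hv : v ∈ S) (hx : x ∉ S) : height (step S x v) = S.card :=
  height_eq_card (Im_step hv hx)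

end LSAux
namespace LSAux
open Finset
variable {n : ℕ}

theorem exists_not_mem {S : Finset (Fin n)} (h : S.card < n) : ∃ c, c ∉ S := by
  by_contra hc
  push_neg at hc
  have hsub : (univ : Finset (Fin n)) ⊆ S := fun c _ => hc c
  have := Finset.card_le_card hsub
  simp [Finset.card_univ] at this
  omega

theorem theta (F : Finset (Fin n)) (f : Fin n) (hf : f ∈ F) (hcard : F.card + 1 < n) :
    ∀ (d : ℕ) (x : Fin n), x.val - f.val ≤ d → x ∉ F → f < x →
    (∀ s ∈ F, s ≤ x → s ≤ f) →
    ∃ L : List (PT n), L ≠ [] ∧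
      (∀ η ∈ L, η ∈ LS n ∧ comp η η = η ∧ height η = F.card + 1) ∧
      listProd L = step F x f := by
  intro d
  induction d with
  | zero =>
    intro x hd hx hfx hcond
    rw [Fin.lt_def] at hfx
    omega
  | succ d ih =>
    intro x hd hx hfx hcond
    have hfxv : f.val < x.val := Fin.lt_def.mp hfx
    by_cases hbase : x.val = f.val + 1
    · -- base case : one step down
      obtain ⟨c, hc⟩ := exists_not_mem
        (show (insert x F).card < n by rw [Finset.card_insert_of_notMem hx]; omega)
      have hcF : c ∉ F := fun h => hc (Finset.mem_insert_of_mem h)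
      have hcx : c ≠ x := fun h => hc (h ▸ Finset.mem_insert_self x F)
      have hxc : x ∉ insert c F := by
        simp only [Finset.mem_insert]
        push_neg
        exact ⟨fun h => hcx h.symm, hx⟩
      have hcor : c < f ∨ x < c := by
        rcases lt_trichotomy c f with h|h|h
        · left; exact h
        · exact absurd (h ▸ hf) hcF
        · right
          rw [Fin.lt_def] at h ⊢
          have : c ≠ x := hcx
          have : c.val ≠ x.val := fun hh => this (Fin.val_injective hh)
          omega
      have hcond' : ∀ s ∈ insert c F, s ≤ x → s ≤ f := by
        intro s hs hsx
        rcases Finset.mem_insert.mp hs with rfl | hs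
        · rcases hcor with h | h
          · exact le_of_lt h
          · exact absurd hsx (not_le.mpr h)
        · exact hcond s hs hsx
      refine ⟨[idp (insert x F), step (insert c F) x f], by simp, ?_, ?_⟩
      · intro η hη
        simp only [List.mem_cons, List.not_mem_nil, or_false] at hη
        rcases hη with rfl | rfl
        · exact ⟨idp_mem_LS _, idp_idem _, by
            rw [height_idp, Finset.card_insert_of_notMem hx]⟩
        · have hfc : f ∈ insert c F := Finset.mem_insert_of_mem hf
          exact ⟨step_mem_LS hfc hxc (le_of_lt hfx) hcond',
            step_idem hfc hxc, by
            rw [height_step hfc hxc, Finset.card_insert_of_notMem hcF]⟩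
      · rw [listProd_cons, listProd_cons, listProd_nil, comp_idPT]
        funext y
        by_cases h1 : y = x
        · subst h1
          simp [comp, idp, step, Finset.mem_insert_self]
        · by_cases h2 : y ∈ F
          · have hyc : y ∈ insert c F := Finset.mem_insert_of_mem h2
            simp [comp, idp, step, h1, h2, hyc, Finset.mem_insert_of_mem h2]
          · have : y ∉ insert x F := by
              simp only [Finset.mem_insert]; push_neg; exact ⟨h1, h2⟩
            simp [comp, idp, step, h1, h2, this]
    · -- recursive case
      have hxn : x.val < n := x.isLt
      set m : Fin n := ⟨x.val - 1, by omega⟩ with hm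
      have hmv : m.val = x.val - 1 := rfl
      have hfm : f < m := by rw [Fin.lt_def]; simp [hmv]; omega
      have hmx : m < x := by rw [Fin.lt_def]; simp [hmv]; omega
      have hmxne : m ≠ x := ne_of_lt hmx
      have hmF : m ∉ F := by
        intro h
        have := hcond m h (le_of_lt hmx)
        rw [Fin.le_def] at this
        have := Fin.lt_def.mp hfm
        omega
      have hxm : x ∉ insert m F := by
        simp only [Finset.mem_insert]; push_neg
        exact ⟨fun h => hmxne h.symm, hx⟩
      have hcondm : ∀ s ∈ insert m F, s ≤ x → s ≤ m := by
        intro s hs hsx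
        rcases Finset.mem_insert.mp hs with rfl | hs
        · exact le_rfl
        · exact le_trans (hcond s hs hsx) (le_of_lt hfm)
      obtain ⟨L', hL'ne, hL'props, hL'prod⟩ := ih m (by omega) hmF hfm
        (fun s hs hsm => hcond s hs (le_trans hsm (le_of_lt hmx)))
      refine ⟨idp (insert x F) :: step (insert m F) x m :: L', by simp, ?_, ?_⟩
      · intro η hη
        simp only [List.mem_cons] at hη
        rcases hη with rfl | rfl | hη
        · exact ⟨idp_mem_LS _, idp_idem _, by
            rw [height_idp, Finset.card_insert_of_notMem hx]⟩
        · have hmm : m ∈ insert m F := Finset.mem_insert_self m F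
          exact ⟨step_mem_LS hmm hxm (le_of_lt hmx) hcondm,
            step_idem hmm hxm, by
            rw [height_step hmm hxm, Finset.card_insert_of_notMem hmF]⟩
        · exact hL'props η hη
      · rw [listProd_cons, listProd_cons, hL'prod]
        funext y
        by_cases h1 : y = x
        · subst h1
          simp [comp, idp, step, Finset.mem_insert_self, hmxne]
        · by_cases h2 : y ∈ F
          · have hyne : y ≠ m := fun h => hmF (h ▸ h2)
            simp [comp, idp, step, h1, h2, hyne, Finset.mem_insert_of_mem h2]
          · have : y ∉ insert x F := by
              simp only [Finset.mem_insert]; push_neg; exact ⟨h1, h2⟩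
            simp [comp, idp, step, h1, h2, this]

end LSAux
namespace LSAux
open Finset
variable {n : ℕ}

/-- For an idempotent, the image is the set of fixed points. -/
theorem Im_idem_eq_fix {ε : PT n} (hid : comp ε ε = ε) :
    Im ε = ↑(univ.filter (fun y => ε y = some y)) := by
  ext b
  simp only [Finset.coe_filter, Set.mem_setOf_eq, Finset.mem_univ, true_and]
  constructor
  · rintro ⟨y, hy⟩
    have := congrFun hid y
    rw [comp, hy] at this
    simpa [hy] using this
  · intro h
    exact ⟨b, h⟩

theorem one_step (h : ℕ) (hh1 : 1 ≤ h) (hhn : h + 2 ≤ n) (ε : PT n) (hLS : ε ∈ LS n)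
    (hid : comp ε ε = ε) (hht : height ε = h) :
    ∃ L : List (PT n), L ≠ [] ∧
      (∀ η ∈ L, η ∈ LS n ∧ comp η η = η ∧ height η = h + 1) ∧
      listProd L = ε := by
  obtain ⟨hiso, hdec⟩ := hLS
  set F : Finset (Fin n) := univ.filter (fun y => ε y = some y) with hF
  have hImF : Im ε = ↑F := Im_idem_eq_fix hid
  have hFcard : F.card = h := by rw [← hht, height_eq_card hImF]
  have hmemF : ∀ y : Fin n, y ∈ F ↔ ε y = some y := by
    intro y; simp [hF]
  by_cases hA : ∀ y, ε y = none ∨ ε y = some y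
  · -- ε is a partial identity
    have hεidp : ε = idp F := by
      funext y
      rcases hA y with h0 | h0
      · have : y ∉ F := by rw [hmemF]; simp [h0]
        simp [idp, this, h0]
      · have : y ∈ F := (hmemF y).mpr h0
        simp [idp, this, h0]
    have h2 : 1 < (univ \ F).card := by
      rw [Finset.card_sdiff_of_subset (Finset.subset_univ F), Finset.card_univ, Fintype.card_fin]
      omega
    obtain ⟨c, hcmem, c', hc'mem, hcc'⟩ := Finset.one_lt_card.mp h2
    have hcF : c ∉ F := (Finset.mem_sdiff.mp hcmem).2
    have hc'F : c' ∉ F := (Finset.mem_sdiff.mp hc'mem).2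
    refine ⟨[idp (insert c F), idp (insert c' F)], by simp, ?_, ?_⟩
    · intro η hη
      simp only [List.mem_cons, List.not_mem_nil, or_false] at hη
      rcases hη with rfl | rfl
      · exact ⟨idp_mem_LS _, idp_idem _, by
          rw [height_idp, Finset.card_insert_of_notMem hcF, hFcard]⟩
      · exact ⟨idp_mem_LS _, idp_idem _, by
          rw [height_idp, Finset.card_insert_of_notMem hc'F, hFcard]⟩
    · rw [listProd_cons, listProd_cons, listProd_nil, comp_idPT, hεidp]
      funext y
      by_cases h1 : y ∈ F
      · simp [comp, idp, Finset.mem_insert_of_mem h1, h1]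
      · by_cases h2 : y = c
        · subst h2
          have : y ∉ insert c' F := by
            simp only [Finset.mem_insert]; push_neg; exact ⟨hcc', h1⟩
          simp [comp, idp, Finset.mem_insert_self, this, h1, hcc']
        · have : y ∉ insert c F := by
            simp only [Finset.mem_insert]; push_neg; exact ⟨h2, h1⟩
          simp [comp, idp, this, h1]
  · -- there is a displaced point
    push_neg at hA
    obtain ⟨y0, hy0none, hy0fix⟩ := hA
    set X : Finset (Fin n) := univ.filter (fun y => ∃ b, ε y = some b ∧ b ≠ y) with hX
    have hy0X : y0 ∈ X := by
      rcases ho : ε y0 with _ | b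
      · exact absurd ho hy0none
      · simp only [hX, Finset.mem_filter, Finset.mem_univ, true_and]
        exact ⟨b, ho, fun hb => hy0fix (hb ▸ ho)⟩
    set x := X.max' ⟨y0, hy0X⟩ with hx
    have hxX : x ∈ X := X.max'_mem _
    obtain ⟨f, hxf, hfne⟩ : ∃ b, ε x = some b ∧ b ≠ x := by
      simpa [hX] using hxX
    have hfx : f < x := lt_of_le_of_ne (hdec x f hxf) hfne
    -- maximality : everything in the domain above x is fixed
    have hmax : ∀ y b, ε y = some b → x < y → b = y := by
      intro y b hyb hxy
      by_contra hby
      have : y ∈ X := by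
        simp only [hX, Finset.mem_filter, Finset.mem_univ, true_and]
        exact ⟨b, hyb, hby⟩
      exact absurd (X.le_max' y this) (not_le.mpr hxy)
    have hfF : f ∈ F := by
      rw [hmemF]
      have := congrFun hid x
      rw [comp, hxf] at this
      simpa [hxf] using this
    have hxF : x ∉ F := by
      rw [hmemF]
      intro hh
      rw [hh] at hxf
      exact hfne (Option.some_injective _ hxf).symm
    have hcond : ∀ s ∈ F, s ≤ x → s ≤ f := by
      intro s hs hsx
      exact hiso s x s f ((hmemF s).mp hs) hxf hsx
    -- ε₀ : make x a fixed point
    set ε₀ : PT n := fun y => if y = x then some x else ε y with hε₀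
    have hε₀LS : ε₀ ∈ LS n := by
      constructor
      · intro y y' a b hy hy' hyy
        simp only [hε₀] at hy hy'
        by_cases h1 : y = x <;> by_cases h2 : y' = x <;> simp [h1, h2] at hy hy'
        · subst hy; subst hy'; exact le_rfl
        · subst hy; subst h1
          have hx2 : x < y' := lt_of_le_of_ne hyy (Ne.symm h2)
          have := hmax y' b hy' hx2
          subst this
          exact hyy
        · subst hy'; subst h2
          exact le_trans (hdec y a hy) hyy
        · exact hiso y y' a b hy hy' hyy
      · intro y a hy
        simp only [hε₀] at hy
        by_cases h1 : y = x <;> simp [h1] at hy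
        · subst hy; subst h1; exact le_rfl
        · exact hdec y a hy
    have hε₀idem : comp ε₀ ε₀ = ε₀ := by
      funext y
      by_cases h1 : y = x
      · simp [comp, hε₀, h1]
      · simp only [comp, hε₀, if_neg h1]
        rcases ho : ε y with _ | b
        · rfl
        · have hbF : b ∈ F := by
            rw [hmemF]
            have := congrFun hid y
            rw [comp, ho] at this
            simpa [ho] using this
          by_cases hbx : b = x
          · simp [hbx]
          · simp [hbx, (hmemF b).mp hbF]
    have hImε₀ : Im ε₀ = ↑(insert x F) := by
      ext b
      constructor
      · rintro ⟨y, hy⟩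
        simp only [hε₀] at hy
        by_cases h1 : y = x <;> simp [h1] at hy
        · subst hy; simp
        · have : b ∈ Im ε := ⟨y, hy⟩
          rw [hImF] at this
          simp only [Finset.coe_insert, Set.mem_insert_iff]
          right; exact this
      · intro hb
        rcases Finset.mem_insert.mp (Finset.mem_coe.mp hb) with hbx | hb
        · subst hbx
          exact ⟨x, by simp [hε₀]⟩
        · refine ⟨b, ?_⟩
          have hbx : b ≠ x := fun h => hxF (h ▸ hb)
          simp [hε₀, hbx, (hmemF b).mp hb]
    obtain ⟨L', hL'ne, hL'props, hL'prod⟩ := theta F f hfF (by omega) (x.val - f.val) x le_rfl hxF hfx hcond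
    refine ⟨ε₀ :: L', by simp, ?_, ?_⟩
    · intro η hη
      rcases List.mem_cons.mp hη with rfl | hη
      · exact ⟨hε₀LS, hε₀idem, by
          rw [height_eq_card hImε₀, Finset.card_insert_of_notMem hxF, hFcard]⟩
      · rw [hFcard] at hL'props
        exact hL'props η hη
    · rw [listProd_cons, hL'prod]
      funext y
      by_cases h1 : y = x
      · subst h1
        simp [comp, hε₀, step, hxf]
      · simp only [comp, hε₀, if_neg h1]
        rcases ho : ε y with _ | b
        · rfl
        · have hbF : b ∈ F := by
            rw [hmemF]
            have := congrFun hid y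
            rw [comp, ho] at this
            simpa [ho] using this
          have hbx : b ≠ x := fun h => hxF (h ▸ hbF)
          simp [step, hbx, hbF]

end LSAux
namespace LSAux
open Finset
variable {n : ℕ}

theorem lift (P : PT n → Prop) :
    ∀ L₀ : List (PT n),
    (∀ η ∈ L₀, ∃ L' : List (PT n), L' ≠ [] ∧ (∀ θ ∈ L', P θ) ∧ listProd L' = η) →
    ∃ L : List (PT n), (L₀ ≠ [] → L ≠ []) ∧ (∀ θ ∈ L, P θ) ∧ listProd L = listProd L₀ := by
  intro L₀
  induction L₀ with
  | nil => intro _; exact ⟨[], by simp, by simp, rfl⟩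
  | cons a L ih =>
    intro H
    obtain ⟨La, hLane, hLaP, hLaprod⟩ := H a List.mem_cons_self
    obtain ⟨LL, _, hLLP, hLLprod⟩ := ih (fun η hη => H η (List.mem_cons_of_mem a hη))
    refine ⟨La ++ LL, ?_, ?_, ?_⟩
    · intro _
      simp [hLane]
    · intro θ hθ
      rcases List.mem_append.mp hθ with hθ | hθ
      · exact hLaP θ hθ
      · exact hLLP θ hθ
    · rw [listProd_append, hLaprod, hLLprod, listProd_cons]

theorem raise (p : ℕ) (hpn : p + 2 ≤ n) :
    ∀ (k h : ℕ), h + k = p → 1 ≤ h →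
    ∀ ε : PT n, ε ∈ LS n → comp ε ε = ε → height ε = h →
    ∃ L : List (PT n), L ≠ [] ∧
      (∀ η ∈ L, η ∈ LS n ∧ comp η η = η ∧ height η = p + 1) ∧
      listProd L = ε := by
  intro k
  induction k with
  | zero =>
    intro h hk hh1 ε hLS hid hht
    have hhp : h = p := by omega
    rw [hhp] at hht
    exact one_step p (by omega) (by omega) ε hLS hid hht
  | succ k ih =>
    intro h hk hh1 ε hLS hid hht
    obtain ⟨L₀, hL₀ne, hL₀props, hL₀prod⟩ := one_step h hh1 (by omega) ε hLS hid hht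
    obtain ⟨L, hLne, hLP, hLprod⟩ := lift
      (fun η => η ∈ LS n ∧ comp η η = η ∧ height η = p + 1) L₀
      (fun η hη => by
        obtain ⟨h1, h2, h3⟩ := hL₀props η hη
        exact ih (h + 1) (by omega) (by omega) η h1 h2 h3)
    exact ⟨L, hLne hL₀ne, hLP, by rw [hLprod, hL₀prod]⟩

end LSAux
namespace LSAux
open Finset
variable {n : ℕ}

theorem dom_card_of_inj {q : ℕ} {γ : PT n}
    (hinj : ∀ y y' b : Fin n, γ y = some b → γ y' = some b → y = y')
    (hht : height γ = q) :
    (univ.filter (fun y => (γ y).isSome)).card = q := by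
  set D := univ.filter (fun y : Fin n => (γ y).isSome) with hD
  set I := univ.filter (fun b : Fin n => ∃ y, γ y = some b) with hI
  have hIm : Im γ = ↑I := by
    ext b
    simp only [hI, Im, Set.mem_setOf_eq, Finset.coe_filter, Finset.mem_univ, true_and]
  have hIcard : I.card = q := by rw [← hht, height_eq_card hIm]
  have himage : I = D.image (fun y => (γ y).getD y) := by
    ext c
    simp only [hI, hD, Finset.mem_filter, Finset.mem_univ, true_and, Finset.mem_image]
    constructor
    · rintro ⟨y, hy⟩
      refine ⟨y, ?_, ?_⟩
      · simp [hy]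
      · rw [hy]; rfl
    · rintro ⟨y, hy, hyc⟩
      obtain ⟨d, hd⟩ := Option.isSome_iff_exists.mp hy
      rw [hd] at hyc
      simp at hyc
      exact ⟨y, hyc ▸ hd⟩
  have hinjOn : Set.InjOn (fun y => (γ y).getD y) ↑D := by
    intro y hy y' hy' heq
    have hyD := Finset.mem_filter.mp (Finset.mem_coe.mp hy)
    have hy'D := Finset.mem_filter.mp (Finset.mem_coe.mp hy')
    obtain ⟨c, hc⟩ := Option.isSome_iff_exists.mp hyD.2
    obtain ⟨c', hc'⟩ := Option.isSome_iff_exists.mp hy'D.2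
    simp only [hc, hc', Option.getD_some] at heq
    subst heq
    exact hinj y y' c hc hc'
  rw [himage, Finset.card_image_of_injOn hinjOn] at hIcard
  exact hIcard

theorem route (q : ℕ) :
    ∀ (k : ℕ) (γ : PT n), γ ∈ LS n →
    (∀ y y' b : Fin n, γ y = some b → γ y' = some b → y = y') →
    height γ = q →
    (univ.filter (fun y => ∃ b, γ y = some b ∧ b ≠ y)).card = k →
    ∃ M : List (PT n), M ≠ [] ∧
      (∀ θ ∈ M, θ ∈ LS n ∧ comp θ θ = θ ∧ height θ = q) ∧
      (∀ y b : Fin n, γ y = some b → listProd M y = some b) := by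
  intro k
  induction k with
  | zero =>
    intro γ hLS hinj hht hcard
    have hfix : ∀ y b, γ y = some b → b = y := by
      intro y b hyb
      by_contra hby
      have hy : y ∈ univ.filter (fun y => ∃ b, γ y = some b ∧ b ≠ y) :=
        Finset.mem_filter.mpr ⟨Finset.mem_univ y, ⟨b, hyb, hby⟩⟩
      rw [Finset.card_eq_zero] at hcard
      rw [hcard] at hy
      exact absurd hy (Finset.notMem_empty y)
    have hidem : comp γ γ = γ := by
      funext y
      rcases ho : γ y with _ | b
      · simp [comp, ho]
      · have hby := hfix y b ho
        rw [hby] at ho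
        simp [comp, ho, hby]
    refine ⟨[γ], by simp, ?_, ?_⟩
    · intro θ hθ
      simp only [List.mem_cons, List.not_mem_nil, or_false] at hθ
      subst hθ
      exact ⟨hLS, hidem, hht⟩
    · intro y b hyb
      rw [listProd_cons, listProd_nil, comp_idPT]
      exact hyb
  | succ k ih =>
    intro γ hLS hinj hht hcard
    obtain ⟨hiso, hdec⟩ := hLS
    set X := univ.filter (fun y => ∃ b, γ y = some b ∧ b ≠ y) with hX
    have hXne : X.Nonempty := by rw [← Finset.card_pos, hcard]; omega
    set x := X.min' hXne with hx
    have hxX : x ∈ X := X.min'_mem _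
    obtain ⟨b, hxb, hbne⟩ : ∃ b, γ x = some b ∧ b ≠ x := by
      simpa [hX] using hxX
    have hbx : b < x := lt_of_le_of_ne (hdec x b hxb) hbne
    have hmin : ∀ z c, γ z = some c → z < x → c = z := by
      intro z c hzc hzx
      by_contra hcz
      have : z ∈ X := Finset.mem_filter.mpr ⟨Finset.mem_univ z, ⟨c, hzc, hcz⟩⟩
      exact absurd (X.min'_le z this) (not_le.mpr hzx)
    have hbdom : γ b = none := by
      rcases ho : γ b with _ | c
      · rfl
      · exfalso
        have hcb := hmin b c ho hbx
        rw [hcb] at ho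
        exact hbne (hinj b x b ho hxb)
    set D := univ.filter (fun y : Fin n => (γ y).isSome) with hD
    have hxD : x ∈ D := Finset.mem_filter.mpr ⟨Finset.mem_univ x, by simp [hxb]⟩
    have hbD : b ∉ D := by
      intro h
      have := (Finset.mem_filter.mp h).2
      rw [hbdom] at this
      simp at this
    have hDcard : D.card = q := dom_card_of_inj hinj hht
    have hq1 : 1 ≤ q := by
      rw [← hDcard]
      exact Finset.card_pos.mpr ⟨x, hxD⟩
    set S := insert b (D.erase x) with hS
    have hbS : b ∈ S := Finset.mem_insert_self _ _
    have hxS : x ∉ S := by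
      simp only [hS, Finset.mem_insert]
      push_neg
      exact ⟨Ne.symm hbne, Finset.notMem_erase x D⟩
    have hScard : S.card = q := by
      rw [hS, Finset.card_insert_of_notMem (fun h => hbD (Finset.mem_of_mem_erase h)),
        Finset.card_erase_of_mem hxD, hDcard]
      omega
    have hcond : ∀ s ∈ S, s ≤ x → s ≤ b := by
      intro s hs hsx
      rcases Finset.mem_insert.mp hs with rfl | hs
      · exact le_rfl
      · have hsne : s ≠ x := Finset.ne_of_mem_erase hs
        have hsD : s ∈ D := Finset.mem_of_mem_erase hs
        obtain ⟨c, hc⟩ := Option.isSome_iff_exists.mp (Finset.mem_filter.mp hsD).2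
        have hslt : s < x := lt_of_le_of_ne hsx hsne
        rw [hmin s c hc hslt] at hc
        exact hiso s x s b hc hxb (le_of_lt hslt)
    -- the modified map
    set γ' : PT n := fun y => if y = x then none else if y = b then some b else γ y with hγ'
    have hγ'x : γ' x = none := by simp [hγ']
    have hγ'b : γ' b = some b := by simp [hγ', hbne]
    have hγ'other : ∀ y, y ≠ x → y ≠ b → γ' y = γ y := by
      intro y h1 h2; simp [hγ', h1, h2]
    have hγ'val : ∀ y c, γ' y = some c → (y = b ∧ c = b) ∨ (y ≠ x ∧ y ≠ b ∧ γ y = some c) := by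
      intro y c hyc
      by_cases h1 : y = x
      · rw [h1, hγ'x] at hyc; exact absurd hyc (by simp)
      · by_cases h2 : y = b
        · subst h2; rw [hγ'b] at hyc
          exact Or.inl ⟨rfl, (Option.some_injective _ hyc).symm⟩
        · exact Or.inr ⟨h1, h2, (hγ'other y h1 h2) ▸ hyc⟩
    have hγ'dec : IsDecreasing γ' := by
      intro y c hyc
      rcases hγ'val y c hyc with ⟨rfl, rfl⟩ | ⟨_, _, h⟩
      · exact le_rfl
      · exact hdec y c h
    have hγ'iso : IsIsotone γ' := by
      intro y y' c c' hy hy' hyy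
      rcases hγ'val y c hy with ⟨hy1, hy2⟩ | ⟨hy1, hy2, hyg⟩
      · rcases hγ'val y' c' hy' with ⟨hy'1, hy'2⟩ | ⟨hy'1, hy'2, hy'g⟩
        · rw [hy2, hy'2]
        · rw [hy2]
          rw [hy1] at hyy
          rcases lt_trichotomy y' x with h | h | h
          · rw [hmin y' c' hy'g h]
            exact hyy
          · exact absurd h hy'1
          · exact hiso x y' b c' hxb hy'g (le_of_lt h)
      · rcases hγ'val y' c' hy' with ⟨hy'1, hy'2⟩ | ⟨hy'1, hy'2, hy'g⟩
        · rw [hy'2]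
          rw [hy'1] at hyy
          have hylt : y < x := lt_of_le_of_lt hyy hbx
          rw [hmin y c hyg hylt]
          exact hyy
        · exact hiso y y' c c' hyg hy'g hyy
    have hγ'inj : ∀ y y' c : Fin n, γ' y = some c → γ' y' = some c → y = y' := by
      intro y y' c hy hy'
      rcases hγ'val y c hy with ⟨hy1, hy2⟩ | ⟨hy1, hy2, hyg⟩
      · rcases hγ'val y' c hy' with ⟨hy'1, _⟩ | ⟨hy'1, hy'2, hy'g⟩
        · rw [hy1, hy'1]
        · rw [hy2] at hy'g
          exact absurd (hinj y' x b hy'g hxb) hy'1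
      · rcases hγ'val y' c hy' with ⟨hy'1, hy'2⟩ | ⟨hy'1, hy'2, hy'g⟩
        · rw [hy'2] at hyg
          exact absurd (hinj y x b hyg hxb) hy1
        · exact hinj y y' c hyg hy'g
    have hImγ' : Im γ' = Im γ := by
      ext c
      constructor
      · rintro ⟨y, hy⟩
        rcases hγ'val y c hy with ⟨hy1, hy2⟩ | ⟨_, _, h⟩
        · rw [hy2]; exact ⟨x, hxb⟩
        · exact ⟨y, h⟩
      · rintro ⟨y, hy⟩
        by_cases h1 : y = x
        · subst h1
          rw [hxb] at hy
          have hbc : b = c := Option.some_injective _ hy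
          rw [← hbc]
          exact ⟨b, hγ'b⟩
        · have h2 : y ≠ b := by
            intro h
            rw [h, hbdom] at hy
            exact absurd hy (by simp)
          exact ⟨y, (hγ'other y h1 h2) ▸ hy⟩
    have hγ'ht : height γ' = q := by
      rw [height, hImγ', ← height, hht]
    have hγ'card : (univ.filter (fun y => ∃ c, γ' y = some c ∧ c ≠ y)).card = k := by
      have hset : univ.filter (fun y => ∃ c, γ' y = some c ∧ c ≠ y) = X.erase x := by
        ext y
        simp only [Finset.mem_filter, Finset.mem_univ, true_and, Finset.mem_erase, hX]
        constructor
        · rintro ⟨c, hyc, hcy⟩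
          rcases hγ'val y c hyc with ⟨h1, h2⟩ | ⟨h1, h2, h⟩
          · exact absurd (h2.trans h1.symm) hcy
          · exact ⟨h1, ⟨c, h, hcy⟩⟩
        · rintro ⟨h1, c, hyc, hcy⟩
          have h2 : y ≠ b := by
            intro h
            rw [h, hbdom] at hyc
            exact absurd hyc (by simp)
          exact ⟨c, (hγ'other y h1 h2).symm ▸ hyc, hcy⟩
      rw [hset, Finset.card_erase_of_mem hxX, hcard]
      omega
    obtain ⟨M', hM'ne, hM'props, hM'prod⟩ := ih γ' ⟨hγ'iso, hγ'dec⟩ hγ'inj hγ'ht hγ'card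
    refine ⟨step S x b :: M', by simp, ?_, ?_⟩
    · intro θ hθ
      rcases List.mem_cons.mp hθ with rfl | hθ
      · exact ⟨step_mem_LS hbS hxS (le_of_lt hbx) hcond, step_idem hbS hxS, by
          rw [height_step hbS hxS, hScard]⟩
      · exact hM'props θ hθ
    · intro y c hyc
      rw [listProd_cons]
      by_cases h1 : y = x
      · subst h1
        rw [hxb] at hyc
        have hbc : b = c := Option.some_injective _ hyc
        have hstep : step S x b x = some b := by simp [step]
        simp only [comp, hstep, Option.bind_some]
        rw [← hbc]
        exact hM'prod b b hγ'b
      · have h2 : y ≠ b := by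
          intro h
          rw [h, hbdom] at hyc
          exact absurd hyc (by simp)
        have hyD : y ∈ D := Finset.mem_filter.mpr ⟨Finset.mem_univ y, by simp [hyc]⟩
        have hyS : y ∈ S := Finset.mem_insert_of_mem (Finset.mem_erase.mpr ⟨h1, hyD⟩)
        have hstep : step S x b y = some y := by simp [step, h1, hyS]
        simp only [comp, hstep, Option.bind_some]
        exact hM'prod y c ((hγ'other y h1 h2) ▸ hyc)

end LSAux
namespace LSAux
open Finset
variable {n : ℕ}

noncomputable def minCl (α : PT n) (b : Fin n) : Fin n :=
  if h : (univ.filter (fun z => α z = some b)).Nonempty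
  then (univ.filter (fun z => α z = some b)).min' h else b

theorem minCl_mem {α : PT n} {b y : Fin n} (hy : α y = some b) :
    α (minCl α b) = some b := by
  have hne : (univ.filter (fun z => α z = some b)).Nonempty :=
    ⟨y, Finset.mem_filter.mpr ⟨Finset.mem_univ y, hy⟩⟩
  rw [minCl, dif_pos hne]
  exact (Finset.mem_filter.mp (Finset.min'_mem _ hne)).2

theorem minCl_le {α : PT n} {b y : Fin n} (hy : α y = some b) :
    minCl α b ≤ y := by
  have hne : (univ.filter (fun z => α z = some b)).Nonempty :=
    ⟨y, Finset.mem_filter.mpr ⟨Finset.mem_univ y, hy⟩⟩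
  rw [minCl, dif_pos hne]
  exact Finset.min'_le _ y (Finset.mem_filter.mpr ⟨Finset.mem_univ y, hy⟩)

/-- collapse each kernel class to its minimum -/
noncomputable def collapse (α : PT n) : PT n := fun y => Option.map (minCl α) (α y)

theorem collapse_val {α : PT n} {y a : Fin n} :
    collapse α y = some a ↔ ∃ b, α y = some b ∧ a = minCl α b := by
  rcases ho : α y with _ | b
  · simp [collapse, ho]
  · simp [collapse, ho, eq_comm]

theorem collapse_mem_LS {α : PT n} (hα : α ∈ LS n) : collapse α ∈ LS n := by
  obtain ⟨hiso, hdec⟩ := hα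
  constructor
  · intro y y' a a' hy hy' hyy
    obtain ⟨b, hb, rfl⟩ := collapse_val.mp hy
    obtain ⟨b', hb', rfl⟩ := collapse_val.mp hy'
    have hbb : b ≤ b' := hiso y y' b b' hb hb' hyy
    by_contra hc
    push_neg at hc
    have h1 : minCl α b' ≤ minCl α b := le_of_lt hc
    have h2 : b' ≤ b := hiso _ _ b' b (minCl_mem hb') (minCl_mem hb) h1
    have hbe : b = b' := le_antisymm hbb h2
    rw [hbe] at hc
    exact absurd rfl (ne_of_lt hc).symm.symm
  · intro y a hy
    obtain ⟨b, hb, rfl⟩ := collapse_val.mp hy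
    exact minCl_le hb

theorem collapse_idem (α : PT n) : comp (collapse α) (collapse α) = collapse α := by
  funext y
  rcases ho : α y with _ | b
  · simp [comp, collapse, ho]
  · have h1 : collapse α y = some (minCl α b) := by simp [collapse, ho]
    have h2 : collapse α (minCl α b) = some (minCl α b) := by
      simp [collapse, minCl_mem ho]
    simp [comp, h1, h2]

theorem Im_eq_filter (α : PT n) :
    Im α = ↑(univ.filter (fun b => ∃ y, α y = some b)) := by
  ext b
  simp [Im]

theorem collapse_height {α : PT n} {q : ℕ} (hht : height α = q) :
    height (collapse α) = q := by
  set I := univ.filter (fun b : Fin n => ∃ y, α y = some b) with hI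
  have hIcard : I.card = q := by rw [← hht, height_eq_card (Im_eq_filter α)]
  have hIm : Im (collapse α) = ↑(I.image (minCl α)) := by
    ext a
    simp only [Finset.coe_image, Set.mem_image, Finset.mem_coe]
    constructor
    · rintro ⟨y, hy⟩
      obtain ⟨b, hb, rfl⟩ := collapse_val.mp hy
      exact ⟨b, Finset.mem_filter.mpr ⟨Finset.mem_univ b, ⟨y, hb⟩⟩, rfl⟩
    · rintro ⟨b, hb, rfl⟩
      obtain ⟨y, hy⟩ := (Finset.mem_filter.mp hb).2
      exact ⟨y, collapse_val.mpr ⟨b, hy, rfl⟩⟩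
  rw [height_eq_card hIm, Finset.card_image_of_injOn, hIcard]
  intro b hb b' hb' heq
  obtain ⟨y, hy⟩ := (Finset.mem_filter.mp (Finset.mem_coe.mp hb)).2
  obtain ⟨y', hy'⟩ := (Finset.mem_filter.mp (Finset.mem_coe.mp hb')).2
  have h1 := minCl_mem hy
  have h2 := minCl_mem hy'
  rw [heq, h2] at h1
  exact (Option.some_injective _ h1).symm

/-- the injective routing map -/
noncomputable def gam (α : PT n) : PT n :=
  fun a => (α a).bind (fun b => if minCl α b = a then some b else none)

theorem gam_val {α : PT n} {a b : Fin n} :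
    gam α a = some b ↔ α a = some b ∧ minCl α b = a := by
  rcases ho : α a with _ | c
  · simp [gam, ho]
  · simp only [gam, ho, Option.bind_some]
    constructor
    · intro h
      split at h
      next heq =>
        have hcb : c = b := Option.some_injective _ h
        subst hcb
        exact ⟨rfl, heq⟩
      next => exact absurd h (by simp)
    · rintro ⟨h1, h2⟩
      have : c = b := Option.some_injective _ (ho ▸ h1)
      subst this
      simp [h2]

theorem gam_mem_LS {α : PT n} (hα : α ∈ LS n) : gam α ∈ LS n := by
  obtain ⟨hiso, hdec⟩ := hα
  constructor
  · intro y y' a a' hy hy' hyy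
    exact hiso y y' a a' (gam_val.mp hy).1 (gam_val.mp hy').1 hyy
  · intro y a hy
    exact hdec y a (gam_val.mp hy).1

theorem gam_inj {α : PT n} : ∀ y y' b : Fin n, gam α y = some b → gam α y' = some b → y = y' := by
  intro y y' b hy hy'
  rw [← (gam_val.mp hy).2, ← (gam_val.mp hy').2]

theorem gam_height {α : PT n} {q : ℕ} (hht : height α = q) : height (gam α) = q := by
  have hIm : Im (gam α) = Im α := by
    ext b
    constructor
    · rintro ⟨y, hy⟩
      exact ⟨y, (gam_val.mp hy).1⟩
    · rintro ⟨y, hy⟩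
      exact ⟨minCl α b, gam_val.mpr ⟨minCl_mem hy, rfl⟩⟩
  rw [height, hIm, ← height, hht]

end LSAux

open LSAux

theorem LS_idempotents_height_succ (n p : ℕ) (hp : 1 ≤ p) (hpn : p ≤ n - 2) :
    (∀ ε : PT n, ε ∈ LS n → comp ε ε = ε → height ε = p →
      ∃ L : List (PT n), L ≠ [] ∧
        (∀ η ∈ L, η ∈ LS n ∧ comp η η = η ∧ height η = p + 1) ∧
        listProd L = ε) ∧
    (∀ α : PT n, α ∈ LS n → height α ≤ p →
      ∃ L : List (PT n), L ≠ [] ∧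
        (∀ η ∈ L, η ∈ LS n ∧ height η = p + 1) ∧
        listProd L = α) := by
  have hn : p + 2 ≤ n := by omega
  constructor
  · intro ε hLS hid hht
    exact LSAux.one_step p hp (by omega) ε hLS hid hht
  · intro α hLS hq
    by_cases h0 : height α = 0
    · -- α is the empty map
      have hIm : Im α = ∅ := (Set.ncard_eq_zero (Set.toFinite _)).mp h0
      have hnone : ∀ y, α y = none := by
        intro y
        rcases ho : α y with _ | b
        · rfl
        · exfalso
          have hb : b ∈ Im α := ⟨y, ho⟩
          rw [hIm] at hb
          exact hb
      set z0 : Fin n := ⟨0, by omega⟩ with hz0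
      obtain ⟨L₁, hL₁ne, hL₁props, hL₁prod⟩ :=
        LSAux.raise p (by omega) (p - 1) 1 (by omega) (by omega)
          (LSAux.idp {z0}) (LSAux.idp_mem_LS _) (LSAux.idp_idem _)
          (by rw [LSAux.height_idp]; simp)
      obtain ⟨T, hTsub, hTcard⟩ := Finset.exists_subset_card_eq
        (show p + 1 ≤ (Finset.univ.erase z0).card by rw [Finset.card_erase_of_mem (Finset.mem_univ _), Finset.card_univ, Fintype.card_fin]; omega)
      have hz0T : z0 ∉ T := fun h => absurd (Finset.mem_erase.mp (hTsub h)).1 (not_not_intro rfl)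
      refine ⟨L₁ ++ [LSAux.idp T], by simp [hL₁ne], ?_, ?_⟩
      · intro η hη
        rcases List.mem_append.mp hη with hη | hη
        · obtain ⟨h1, _, h3⟩ := hL₁props η hη
          exact ⟨h1, h3⟩
        · simp only [List.mem_cons, List.not_mem_nil, or_false] at hη
          subst hη
          exact ⟨LSAux.idp_mem_LS _, by rw [LSAux.height_idp, hTcard]⟩
      · rw [LSAux.listProd_append, hL₁prod, LSAux.listProd_cons, LSAux.listProd_nil,
          LSAux.comp_idPT]
        funext y
        by_cases h1 : y = z0
        · subst h1
          simp [comp, LSAux.idp, hz0T, hnone z0]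
        · simp [comp, LSAux.idp, h1, hnone y]
    · -- α has positive height
      set q := height α with hqdef
      have hq1 : 1 ≤ q := Nat.one_le_iff_ne_zero.mpr h0
      obtain ⟨M, hMne, hMprops, hMprod⟩ :=
        LSAux.route q ((Finset.univ.filter (fun y => ∃ b, gam α y = some b ∧ b ≠ y)).card)
          (gam α) (gam_mem_LS hLS) gam_inj (gam_height rfl) rfl
      have hprod : comp (collapse α) (listProd M) = α := by
        funext y
        rcases ho : α y with _ | b
        · simp [comp, collapse, ho]
        · have h1 : collapse α y = some (minCl α b) := by simp [collapse, ho]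
          have h2 : gam α (minCl α b) = some b := gam_val.mpr ⟨minCl_mem ho, rfl⟩
          simp only [comp, h1, Option.bind_some]
          rw [hMprod _ _ h2]
      obtain ⟨L, hLne, hLP, hLprod⟩ := LSAux.lift
        (fun η => η ∈ LS n ∧ comp η η = η ∧ height η = p + 1)
        (collapse α :: M)
        (fun η hη => by
          rcases List.mem_cons.mp hη with rfl | hη
          · exact LSAux.raise p (by omega) (p - q) q (by omega) hq1 _
              (collapse_mem_LS hLS) (collapse_idem α) (collapse_height rfl)
          · obtain ⟨h1, h2, h3⟩ := hMprops η hη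
            exact LSAux.raise p (by omega) (p - q) q (by omega) hq1 η h1 h2 h3)
      refine ⟨L, hLne (by simp), fun η hη => ⟨(hLP η hη).1, (hLP η hη).2.2⟩, ?_⟩
      rw [hLprod, LSAux.listProd_cons, hprod]
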